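/- Let L, W, σ, h, V, Q, P̄ > 0, ξ ≥ 0, f > 0 and τ_d > ξ/f. Define, for p > 0, D(p) = L/(W·log₂(1 + p·h/σ)) + ξ/f and E(p) = L·p/(W·log₂(1 + p·h/σ)), and define the per-slot cost g(p) = V·E(p) if D(p) ≤ τ_d and g(p) = Q if D(p) > τ_d, with g(0) = Q. Let p_min = (σ/h)·(2^{L/(W·(τ_d − ξ/f))} − 1) and p_max = min(Q/(V·(τ_d − ξ/f)), P̄). Then the point p* = p_min if p_min ≤ p_max, and p* = 0 otherwise, is a global minimizer of g over the interval [0, P̄], i.e., g(p*) ≤ g(p) for every p ∈ [0, P̄]. -/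

import Mathlib

private lemma aux_log_ineq {a b c : ℝ} (ha : 0 < a) (hab : a ≤ b) (hc : 0 < c) :
    a * Real.log (1 + c * b) ≤ b * Real.log (1 + c * a) := by
  have hb : 0 < b := lt_of_lt_of_le ha hab
  have ht0 : 0 ≤ a / b := le_of_lt (div_pos ha hb)
  have ht1 : a / b ≤ 1 := (div_le_one hb).mpr hab
  have hmem1 : (1 + c * b) ∈ Set.Ioi (0 : ℝ) := by
    simp only [Set.mem_Ioi]; nlinarith
  have hmem2 : (1 : ℝ) ∈ Set.Ioi (0 : ℝ) := by norm_num
  have hconc : (a / b) • Real.log (1 + c * b) + (1 - a / b) • Real.log 1 ≤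
      Real.log ((a / b) • (1 + c * b) + (1 - a / b) • (1 : ℝ)) :=
    strictConcaveOn_log_Ioi.concaveOn.2 hmem1 hmem2 ht0 (by linarith) (by ring)
  simp only [smul_eq_mul, Real.log_one, mul_zero, add_zero] at hconc
  have hpt : (a / b) * (1 + c * b) + (1 - a / b) * 1 = 1 + c * a := by
    field_simp
    ring
  rw [hpt] at hconc
  have hmul := mul_le_mul_of_nonneg_left hconc (le_of_lt hb)
  calc a * Real.log (1 + c * b) = b * (a / b * Real.log (1 + c * b)) := by
        field_simp
    _ ≤ b * Real.log (1 + c * a) := hmul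

set_option maxHeartbeats 1000000 in
/-- Proposition 1 of the paper: the threshold power strategy is a global minimizer
of the per-slot cost over `[0, P̄]`. -/
theorem stmt_4 (L W σ V Q Pbar ξ f τd hgain : ℝ)
    (hL : 0 < L) (hW : 0 < W) (hσ : 0 < σ) (hh : 0 < hgain) (hV : 0 < V)
    (hQ : 0 < Q) (hP : 0 < Pbar) (hξ : 0 ≤ ξ) (hf : 0 < f) (hτ : ξ / f < τd)
    (D E g : ℝ → ℝ)
    (hD : ∀ p, 0 < p → D p = L / (W * Real.logb 2 (1 + p * hgain / σ)) + ξ / f)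
    (hE : ∀ p, 0 < p → E p = L * p / (W * Real.logb 2 (1 + p * hgain / σ)))
    (hg : ∀ p, 0 < p → g p = if D p ≤ τd then V * E p else Q)
    (hg0 : g 0 = Q)
    (pmin pmax pstar : ℝ)
    (hpmin : pmin = σ / hgain * ((2 : ℝ) ^ (L / (W * (τd - ξ / f))) - 1))
    (hpmax : pmax = min (Q / (V * (τd - ξ / f))) Pbar)
    (hpstar : pstar = if pmin ≤ pmax then pmin else 0) :
    ∀ p ∈ Set.Icc (0 : ℝ) Pbar, g pstar ≤ g p := by
  set T : ℝ := τd - ξ / f with hTdef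
  have hT : 0 < T := by simp only [hTdef]; linarith
  set x0 : ℝ := L / (W * T) with hx0def
  have hx0 : 0 < x0 := div_pos hL (mul_pos hW hT)
  have h2x0 : (1 : ℝ) < (2 : ℝ) ^ x0 :=
    (Real.one_lt_rpow_iff_of_pos (by norm_num)).mpr (Or.inl ⟨one_lt_two, hx0⟩)
  have hpm : 0 < pmin := by
    rw [hpmin]
    exact mul_pos (div_pos hσ hh) (by linarith)
  have hkey : 1 + pmin * hgain / σ = (2 : ℝ) ^ x0 := by
    rw [hpmin]
    field_simp
    ring
  have hlbpmin : Real.logb 2 (1 + pmin * hgain / σ) = x0 := by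
    rw [hkey, Real.logb_rpow (by norm_num) (by norm_num)]
  have hlbpos : ∀ p : ℝ, 0 < p → 0 < Real.logb 2 (1 + p * hgain / σ) := by
    intro p hp
    apply Real.logb_pos one_lt_two
    have : 0 < p * hgain / σ := div_pos (mul_pos hp hh) hσ
    linarith
  -- equivalence between deadline feasibility and p ≥ pmin
  have hiff : ∀ p : ℝ, 0 < p → (D p ≤ τd ↔ pmin ≤ p) := by
    intro p hp
    have hlb := hlbpos p hp
    rw [hD p hp]
    have h1 : L / (W * Real.logb 2 (1 + p * hgain / σ)) + ξ / f ≤ τd ↔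
        L / (W * Real.logb 2 (1 + p * hgain / σ)) ≤ T := by
      constructor <;> intro <;> simp only [hTdef] at * <;> linarith
    rw [h1, div_le_iff₀ (mul_pos hW hlb)]
    have h2 : L ≤ T * (W * Real.logb 2 (1 + p * hgain / σ)) ↔
        x0 ≤ Real.logb 2 (1 + p * hgain / σ) := by
      rw [hx0def, div_le_iff₀ (mul_pos hW hT)]
      constructor <;> intro <;> nlinarith
    have hpm' : (0 : ℝ) < 1 + pmin * hgain / σ := by
      have := hlbpos pmin hpm
      nlinarith [hkey, h2x0]
    have hp' : (0 : ℝ) < 1 + p * hgain / σ := by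
      have : 0 < p * hgain / σ := div_pos (mul_pos hp hh) hσ
      linarith
    rw [h2, ← hlbpmin, Real.logb_le_logb one_lt_two hpm' hp']
    constructor <;> intro hle
    · have h3 : pmin * hgain / σ ≤ p * hgain / σ := by linarith
      have h4 : pmin * hgain ≤ p * hgain := by
        have := mul_le_mul_of_nonneg_right h3 (le_of_lt hσ)
        calc pmin * hgain = pmin * hgain / σ * σ := by field_simp
          _ ≤ p * hgain / σ * σ := this
          _ = p * hgain := by field_simp
      exact le_of_mul_le_mul_right h4 hh
    · have h3 : pmin * hgain / σ ≤ p * hgain / σ := by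
        gcongr
      linarith
  -- energy lower bound for feasible powers
  have hEmono : ∀ p : ℝ, pmin ≤ p → pmin * T ≤ E p := by
    intro p hple
    have hp : 0 < p := lt_of_lt_of_le hpm hple
    have hlb := hlbpos p hp
    rw [hE p hp]
    have haux := aux_log_ineq hpm hple (div_pos hh hσ)
    have hcomm : ∀ q : ℝ, 1 + hgain / σ * q = 1 + q * hgain / σ := by
      intro q; ring
    rw [hcomm, hcomm] at haux
    have hlog2 : 0 < Real.log 2 := Real.log_pos one_lt_two
    have hauxb : pmin * Real.logb 2 (1 + p * hgain / σ) ≤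
        p * Real.logb 2 (1 + pmin * hgain / σ) := by
      simp only [Real.logb, ← mul_div_assoc]
      gcongr
    rw [hlbpmin] at hauxb
    have hTx0 : T = L / (W * x0) := by
      rw [hx0def]
      field_simp
    rw [hTx0, le_div_iff₀ (mul_pos hW hlb)]
    have heq : pmin * (L / (W * x0)) * (W * Real.logb 2 (1 + p * hgain / σ)) =
        (L / x0) * (pmin * Real.logb 2 (1 + p * hgain / σ)) := by
      field_simp
    rw [heq]
    calc (L / x0) * (pmin * Real.logb 2 (1 + p * hgain / σ))
        ≤ (L / x0) * (p * x0) :=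
          mul_le_mul_of_nonneg_left hauxb (le_of_lt (div_pos hL hx0))
      _ = L * p := by field_simp
  have hEpmin : E pmin = pmin * T := by
    rw [hE pmin hpm, hlbpmin, hx0def]
    field_simp
  have hDpmin : D pmin ≤ τd := (hiff pmin hpm).mpr le_rfl
  have hgpmin : g pmin = V * (pmin * T) := by
    rw [hg pmin hpm, if_pos hDpmin, hEpmin]
  intro p hp
  obtain ⟨hp0, hpP⟩ := hp
  by_cases hc : pmin ≤ pmax
  · -- pstar = pmin
    rw [hpstar, if_pos hc, hgpmin]
    have hQle : V * (pmin * T) ≤ Q := by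
      have h1 : pmin ≤ Q / (V * T) := le_trans hc (by rw [hpmax]; exact min_le_left _ _)
      have := (le_div_iff₀ (mul_pos hV hT)).mp h1
      nlinarith
    rcases eq_or_lt_of_le hp0 with h0 | h0
    · rw [← h0, hg0]; exact hQle
    · rw [hg p h0]
      split_ifs with hd
      · have hple := (hiff p h0).mp hd
        exact mul_le_mul_of_nonneg_left (hEmono p hple) (le_of_lt hV)
      · exact hQle
  · -- pstar = 0
    rw [hpstar, if_neg hc, hg0]
    rcases eq_or_lt_of_le hp0 with h0 | h0
    · rw [← h0, hg0]
    · rw [hg p h0]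
      split_ifs with hd
      · have hple := (hiff p h0).mp hd
        push_neg at hc
        rw [hpmax] at hc
        rcases min_lt_iff.mp hc with hlt | hlt
        · have h1 : Q < pmin * (V * T) := (div_lt_iff₀ (mul_pos hV hT)).mp hlt
          have h2 := mul_le_mul_of_nonneg_left (hEmono p hple) (le_of_lt hV)
          nlinarith
        · linarith
      · exact le_refl Q
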